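/- Suppose W = U' · V'ᵀ with U' ∈ ℝ^{m×r}, V' ∈ ℝ^{n×r}, and suppose |U'| = h₀ · ℓ_uᵀ and |V'| = g₀ · ℓ_vᵀ exactly (rank-1 nonnegative factorizations with h₀ ∈ ℝ^m, g₀ ∈ ℝ^n, ℓ_u, ℓ_v ∈ ℝ^r all entrywise nonnegative). Then with U_sign = sign(U'), V_sign = sign(V'), and ℓ₀ = ℓ_u ⊙ ℓ_v (entrywise product), one has W = diag(h₀) · U_sign · diag(ℓ₀) · V_signᵀ · diag(g₀). That is, Dual-SVID initialization is exact when the magnitude matrices are exactly rank-1. -/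
import Mathlib


open Matrix

noncomputable def signMat {m n : Type*} (A : Matrix m n ℝ) : Matrix m n ℝ :=
  fun i j => if 0 ≤ A i j then 1 else -1

lemma sign_mul_abs' (a : ℝ) : (if 0 ≤ a then (1:ℝ) else -1) * |a| = a := by
  split <;> rename_i h
  · rw [abs_of_nonneg h, one_mul]
  · rw [abs_of_neg (lt_of_not_ge h)]; ring

theorem dual_svid_exact (m n r : ℕ)
    (W : Matrix (Fin m) (Fin n) ℝ)
    (U' : Matrix (Fin m) (Fin r) ℝ) (V' : Matrix (Fin n) (Fin r) ℝ)
    (hW : W = U' * V'ᵀ)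
    (h0 : Fin m → ℝ) (g0 : Fin n → ℝ) (lu lv : Fin r → ℝ)
    (hh0 : ∀ i, 0 ≤ h0 i) (hg0 : ∀ j, 0 ≤ g0 j)
    (hlu : ∀ k, 0 ≤ lu k) (hlv : ∀ k, 0 ≤ lv k)
    (hU : ∀ i k, |U' i k| = h0 i * lu k)
    (hV : ∀ j k, |V' j k| = g0 j * lv k) :
    W = diagonal h0 * signMat U' * diagonal (fun k => lu k * lv k) *
          (signMat V')ᵀ * diagonal g0 := by
  subst hW
  ext i j
  rw [Matrix.mul_diagonal, Matrix.mul_apply]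
  rw [Matrix.mul_apply]
  simp only [Matrix.mul_diagonal, Matrix.diagonal_mul, transpose_apply, signMat,
    Finset.sum_mul]
  apply Finset.sum_congr rfl
  intro k _
  have hu : U' i k = (if 0 ≤ U' i k then (1:ℝ) else -1) * (h0 i * lu k) := by
    rw [← hU i k, sign_mul_abs']
  have hv : V' j k = (if 0 ≤ V' j k then (1:ℝ) else -1) * (g0 j * lv k) := by
    rw [← hV j k, sign_mul_abs']
  conv_lhs => rw [hu, hv]
  ring
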